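/- Let a, b, c, d ∈ ℂ with ad − bc ≠ 0 and let φ(z) = (az+b)/(cz+d) be a selfmap of 𝔻. Suppose φ fixes a point ζ with |ζ| = 1 (cζ + d ≠ 0 and φ(ζ) = ζ) and that the derivative φ'(ζ) = (ad − bc)/(cζ + d)² equals a real number s with 0 < s < 1. Then the linear-fractional map σ∘φ⁻¹, given explicitly by Ψ(z) = ((conj(a)·d + conj(c)·c)·z − (conj(a)·b + conj(c)·a)) / ((−conj(b)·d − conj(d)·c)·z + (conj(b)·b + conj(d)·a)), maps 𝔻 into 𝔻: for every z ∈ 𝔻 its denominator is nonzero and |Ψ(z)| < 1. -/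

import Mathlib

open ComplexConjugate

/-- If `φ(z) = (az+b)/(cz+d)` is a linear-fractional selfmap of the unit disk of
hyperbolic type (fixed point `ζ` on the unit circle with `φ'(ζ) = s ∈ (0,1)`), then
the linear-fractional map `σ ∘ φ⁻¹` (with the displayed coefficients) maps the unit
disk into itself (Sadraoui: `C_φ` is coposinormal). -/
theorem sigma_comp_phi_inv_selfmap_of_hyperbolic (a b c d ζ : ℂ) (s : ℝ)
    (hdet : a * d - b * c ≠ 0)
    (hself : ∀ z : ℂ, ‖z‖ < 1 →
      c * z + d ≠ 0 ∧ ‖(a * z + b) / (c * z + d)‖ < 1)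
    (hζ : ‖ζ‖ = 1) (hζden : c * ζ + d ≠ 0)
    (hfix : (a * ζ + b) / (c * ζ + d) = ζ)
    (hs0 : 0 < s) (hs1 : s < 1)
    (hderiv : (a * d - b * c) / (c * ζ + d) ^ 2 = (s : ℂ)) :
    ∀ z : ℂ, ‖z‖ < 1 →
      (-conj b * d - conj d * c) * z + (conj b * b + conj d * a) ≠ 0 ∧
      ‖((conj a * d + conj c * c) * z - (conj a * b + conj c * a)) /
        ((-conj b * d - conj d * c) * z + (conj b * b + conj d * a))‖ < 1 := by
  have hζ0 : ζ ≠ 0 := by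
    intro h; rw [h] at hζ; simp at hζ
  have hw : ζ * conj ζ = 1 := by
    rw [Complex.mul_conj]
    norm_cast
    rw [← Complex.sq_norm, hζ]; norm_num
  set t : ℂ := c * ζ + d with htdef
  have ht : t ≠ 0 := hζden
  have hd : d = t - c * ζ := by rw [htdef]; ring
  rw [div_eq_iff ht] at hfix
  have hb0 : b = ζ * t - a * ζ := by linear_combination hfix
  rw [div_eq_iff (pow_ne_zero 2 ht)] at hderiv
  have hast : t * (a - c * ζ) = t * ((s : ℂ) * t) := by
    have h1 : t * (a - c * ζ) = a * d - b * c := by rw [hb0, hd]; ring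
    rw [hderiv] at h1
    linear_combination h1
  have ha : a = c * ζ + (s : ℂ) * t := by
    have h2 := mul_left_cancel₀ ht hast
    linear_combination h2
  have hb : b = (1 - (s : ℂ)) * ζ * t - c * ζ ^ 2 := by
    rw [ha] at hb0; rw [hb0]; ring
  have hca : conj a = conj c * conj ζ + (s : ℂ) * conj t := by
    rw [ha]; simp only [map_add, map_mul, Complex.conj_ofReal]
  have hcb : conj b = (1 - (s : ℂ)) * conj ζ * conj t - conj c * (conj ζ) ^ 2 := by
    rw [hb]; simp only [map_sub, map_mul, map_pow, map_one, Complex.conj_ofReal]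
  have hcd : conj d = conj t - conj c * conj ζ := by
    rw [hd]; simp only [map_sub, map_mul, Complex.conj_ofReal]
  set T2 : ℝ := Complex.normSq t with hT2def
  have hT2c : (T2 : ℂ) = t * conj t := by rw [hT2def, Complex.mul_conj]
  set Er : ℝ := (1 - s) * T2 - 2 * (c * ζ * conj t).re with hErdef
  have hEc : (Er : ℂ) = (1 - (s : ℂ)) * (t * conj t) - (c * ζ * conj t + conj c * conj ζ * t) := by
    have h2 : conj (c * ζ * conj t) = conj c * conj ζ * t := by
      simp only [map_mul, Complex.conj_conj]
    have h1 := Complex.add_conj (c * ζ * conj t)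
    rw [h2] at h1
    push_cast at h1
    rw [hErdef]
    push_cast
    rw [hT2c]
    linear_combination h1
  have hstep : ∀ r : ℝ, 0 < r → r < 1 → 0 < Er * (1 + r) + T2 * (1 - r) := by
    intro r hr0 hr1
    have habsr : ‖-(r : ℂ) * ζ‖ < 1 := by
      rw [norm_mul, norm_neg, Complex.norm_real, Real.norm_eq_abs, hζ, mul_one, abs_of_pos hr0]
      exact hr1
    obtain ⟨hden, habs⟩ := hself (-(r : ℂ) * ζ) habsr
    rw [norm_div, div_lt_one (norm_pos_iff.2 hden)] at habs
    have hns : Complex.normSq (a * (-(r : ℂ) * ζ) + b) <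
        Complex.normSq (c * (-(r : ℂ) * ζ) + d) := by
      rw [← Complex.sq_norm, ← Complex.sq_norm]
      exact pow_lt_pow_left₀ habs (norm_nonneg _) (by norm_num)
    have hid : ((Complex.normSq (c * (-(r : ℂ) * ζ) + d) : ℝ) : ℂ) -
        ((Complex.normSq (a * (-(r : ℂ) * ζ) + b) : ℝ) : ℂ) =
        (((s * (1 + r) * (Er * (1 + r) + T2 * (1 - r)) : ℝ)) : ℂ) := by
      rw [← Complex.mul_conj, ← Complex.mul_conj]
      push_cast
      rw [hEc, hT2c]
      simp only [map_add, map_mul, map_sub, map_neg, map_pow, map_one,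
        Complex.conj_conj, Complex.conj_ofReal]
      rw [hca, hcb, hcd, ha, hb, hd]
      linear_combination ((-1)*t*(conj t) + (2)*t*(conj t)*(s:ℂ) + (2)*t*(conj t)*(s:ℂ)*(r:ℂ) + (-1)*t*(conj t)*(s:ℂ)^2 + (-2)*t*(conj t)*(s:ℂ)^2*(r:ℂ) + (-1)*t*(conj t)*(s:ℂ)^2*(r:ℂ)^2 + (1)*(conj ζ)*(conj c)*t + (1)*(conj ζ)*(conj c)*t*(r:ℂ) + (-1)*(conj ζ)*(conj c)*t*(s:ℂ) + (-2)*(conj ζ)*(conj c)*t*(s:ℂ)*(r:ℂ) + (-1)*(conj ζ)*(conj c)*t*(s:ℂ)*(r:ℂ)^2 + (1)*ζ*c*(conj t) + (1)*ζ*c*(conj t)*(r:ℂ) + (-1)*ζ*c*(conj t)*(s:ℂ) + (-2)*ζ*c*(conj t)*(s:ℂ)*(r:ℂ) + (-1)*ζ*c*(conj t)*(s:ℂ)*(r:ℂ)^2 + (-1)*ζ*(conj ζ)*c*(conj c) + (-2)*ζ*(conj ζ)*c*(conj c)*(r:ℂ) + (-1)*ζ*(conj ζ)*c*(conj c)*(r:ℂ)^2)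 * hw
    have hidr : Complex.normSq (c * (-(r : ℂ) * ζ) + d) -
        Complex.normSq (a * (-(r : ℂ) * ζ) + b) =
        s * (1 + r) * (Er * (1 + r) + T2 * (1 - r)) := by exact_mod_cast hid
    nlinarith [hns, hidr, mul_pos hs0 (by linarith : (0:ℝ) < 1 + r)]
  have hT2pos : 0 < T2 := Complex.normSq_pos.2 ht
  have hEr : 0 ≤ Er := by
    by_contra hneg
    push_neg at hneg
    have hr0 : 0 < max (1/2 : ℝ) (1 + (Er / (2 * T2))) := lt_max_of_lt_left (by norm_num)
    have hr1 : max (1/2 : ℝ) (1 + (Er / (2 * T2))) < 1 := by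
      apply max_lt (by norm_num)
      have : (Er / (2 * T2)) < 0 := div_neg_of_neg_of_pos hneg (by linarith)
      linarith
    have hkey := hstep _ hr0 hr1
    have hge : 1 + (Er / (2 * T2)) ≤ max (1/2 : ℝ) (1 + (Er / (2 * T2))) := le_max_right _ _
    set r := max (1/2 : ℝ) (1 + (Er / (2 * T2)))
    have h1r : 1 - r ≤ -(Er / (2 * T2)) := by linarith
    have hEmul : Er * (1 + r) ≤ Er := by nlinarith [mul_neg_of_neg_of_pos hneg hr0]
    have hT2mul : T2 * (1 - r) ≤ -(Er / 2) := by
      have h3 := mul_le_mul_of_nonneg_left h1r hT2pos.le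
      have h4 : T2 * (-(Er / (2 * T2))) = -(Er / 2) := by
        field_simp
      linarith [h3, h4.le, h4.ge]
    linarith [hkey, hEmul, hT2mul]
  have hμ : 0 ≤ s ^ 2 * (1 - s) * T2 * Er := by
    apply mul_nonneg _ hEr
    apply mul_nonneg _ hT2pos.le
    apply mul_nonneg (sq_nonneg s) (by linarith)
  have hd2pos : 0 < s ^ 2 * T2 ^ 2 := by positivity
  have hΔpos : 0 < s ^ 2 * (1 - s) * T2 * Er + s ^ 2 * T2 ^ 2 := by linarith
  intro z hz
  set α : ℂ := conj a * d + conj c * c with hαdef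
  set B : ℂ := conj a * b + conj c * a with hBdef
  set G : ℂ := -conj b * d - conj d * c with hGdef
  set D : ℂ := conj b * b + conj d * a with hDdef
  have I1 : -B * conj D - α * conj G = ((s ^ 2 * (1 - s) * T2 * Er : ℝ) : ℂ) * ζ := by
    rw [hαdef, hBdef, hGdef, hDdef]
    push_cast
    rw [hEc, hT2c]
    simp only [map_add, map_mul, map_sub, map_neg, map_pow, map_one,
      Complex.conj_conj, Complex.conj_ofReal]
    rw [hca, hcb, hcd, ha, hb, hd]
    linear_combination ((-1)*(conj c)*t^2*(conj t)*(s:ℂ) + (1)*(conj c)*t^2*(conj t)*(s:ℂ)^2 + (-1)*c*(conj c)^2*t + (-1)*(conj ζ)*(conj c)^2*t^2 + (1)*(conj ζ)*(conj c)^2*t^2*(s:ℂ) + (-1)*ζ*t^2*(conj t)^2*(s:ℂ) + (3)*ζ*t^2*(conj t)^2*(s:ℂ)^2 + (-3)*ζ*t^2*(conj t)^2*(s:ℂ)^3 + (1)*ζ*t^2*(conj t)^2*(s:ℂ)^4 + (-1)*ζ*c*(conj c)*t*(conj t) + (4)*ζ*c*(conj c)*t*(conj t)*(s:ℂ) + (-1)*ζ*c*(conj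 c)*t*(conj t)*(s:ℂ)^2 + (1)*ζ*c^2*(conj c)^2 + (-1)*ζ*(conj ζ)*(conj c)*t^2*(conj t) + (4)*ζ*(conj ζ)*(conj c)*t^2*(conj t)*(s:ℂ) + (-5)*ζ*(conj ζ)*(conj c)*t^2*(conj t)*(s:ℂ)^2 + (2)*ζ*(conj ζ)*(conj c)*t^2*(conj t)*(s:ℂ)^3 + (3)*ζ*(conj ζ)*c*(conj c)^2*t + (-2)*ζ*(conj ζ)*c*(conj c)^2*t*(s:ℂ) + (1)*ζ*(conj ζ)^2*(conj c)^2*t^2 + (-2)*ζ*(conj ζ)^2*(conj c)^2*t^2*(s:ℂ) + (1)*ζ*(conj ζ)^2*(conj c)^2*t^2*(s:ℂ)^2 + (2)*ζ^2*c*t*(conj t)^2*(s:ℂ) + (-4)*ζ^2*c*t*(conj t)^2*(s:ℂ)^2 + (2)*ζ^2*c*t*(conj t)^2*(s:ℂ)^3 + (1)*ζ^2*c^2*(conj c)*(conj t) + (-2)*ζ^2*c^2*(conj c)*(conj t)*(s:ℂ) + (2)*ζ^2*(conj ζ)*c*(conj c)*t*(conj t) + (-6)*ζ^2*(conj ζ)*c*(conj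 c)*t*(conj t)*(s:ℂ) + (4)*ζ^2*(conj ζ)*c*(conj c)*t*(conj t)*(s:ℂ)^2 + (-2)*ζ^2*(conj ζ)*c^2*(conj c)^2 + (-2)*ζ^2*(conj ζ)^2*c*(conj c)^2*t + (2)*ζ^2*(conj ζ)^2*c*(conj c)^2*t*(s:ℂ) + (-1)*ζ^3*c^2*(conj t)^2*(s:ℂ) + (1)*ζ^3*c^2*(conj t)^2*(s:ℂ)^2 + (-1)*ζ^3*(conj ζ)*c^2*(conj c)*(conj t) + (2)*ζ^3*(conj ζ)*c^2*(conj c)*(conj t)*(s:ℂ) + (1)*ζ^3*(conj ζ)^2*c^2*(conj c)^2) * hw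
  have I2 : α * D - (-B) * G = ((s ^ 2 * T2 ^ 2 : ℝ) : ℂ) := by
    rw [hαdef, hBdef, hGdef, hDdef]
    push_cast
    rw [hT2c]
    rw [hca, hcb, hcd, ha, hb, hd]
    ring
  have I3 : D * conj D - G * conj G =
      ((s ^ 2 * (1 - s) * T2 * Er + s ^ 2 * T2 ^ 2 : ℝ) : ℂ) := by
    rw [hGdef, hDdef]
    push_cast
    rw [hEc, hT2c]
    simp only [map_add, map_mul, map_sub, map_neg, map_pow, map_one,
      Complex.conj_conj, Complex.conj_ofReal]
    rw [hca, hcb, hcd, ha, hb, hd]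
    linear_combination ((1)*t^2*(conj t)^2*(s:ℂ)^2 + (-2)*t^2*(conj t)^2*(s:ℂ)^3 + (1)*t^2*(conj t)^2*(s:ℂ)^4 + (1)*c*(conj c)*t*(conj t) + (1)*(conj ζ)*(conj c)*t^2*(conj t) + (-2)*(conj ζ)*(conj c)*t^2*(conj t)*(s:ℂ) + (1)*(conj ζ)*(conj c)*t^2*(conj t)*(s:ℂ)^3 + (-1)*(conj ζ)*c*(conj c)^2*t + (-1)*(conj ζ)^2*(conj c)^2*t^2 + (1)*(conj ζ)^2*(conj c)^2*t^2*(s:ℂ) + (1)*ζ*c*t*(conj t)^2 + (-2)*ζ*c*t*(conj t)^2*(s:ℂ) + (1)*ζ*c*t*(conj t)^2*(s:ℂ)^3 + (-1)*ζ*c^2*(conj c)*(conj t) + (1)*ζ*(conj ζ)*t^2*(conj t)^2 + (-4)*ζ*(conj ζ)*t^2*(conj t)^2*(s:ℂ) + (6)*ζ*(conj ζ)*t^2*(conj t)^2*(s:ℂ)^2 + (-4)*ζ*(conj ζ)*t^2*(conj t)^2*(s:ℂ)^3 + (1)*ζ*(conj ζ)*t^2*(conj t)^2*(s:ℂ)^4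 + (-4)*ζ*(conj ζ)*c*(conj c)*t*(conj t) + (6)*ζ*(conj ζ)*c*(conj c)*t*(conj t)*(s:ℂ) + (-1)*ζ*(conj ζ)*c*(conj c)*t*(conj t)*(s:ℂ)^2 + (1)*ζ*(conj ζ)*c^2*(conj c)^2 + (-2)*ζ*(conj ζ)^2*(conj c)*t^2*(conj t) + (6)*ζ*(conj ζ)^2*(conj c)*t^2*(conj t)*(s:ℂ) + (-6)*ζ*(conj ζ)^2*(conj c)*t^2*(conj t)*(s:ℂ)^2 + (2)*ζ*(conj ζ)^2*(conj c)*t^2*(conj t)*(s:ℂ)^3 + (3)*ζ*(conj ζ)^2*c*(conj c)^2*t + (-2)*ζ*(conj ζ)^2*c*(conj c)^2*t*(s:ℂ) + (1)*ζ*(conj ζ)^3*(conj c)^2*t^2 + (-2)*ζ*(conj ζ)^3*(conj c)^2*t^2*(s:ℂ) + (1)*ζ*(conj ζ)^3*(conj c)^2*t^2*(s:ℂ)^2 + (-1)*ζ^2*c^2*(conj t)^2 + (1)*ζ^2*c^2*(conj t)^2*(s:ℂ) + (-2)*ζ^2*(conj ζ)*c*t*(conj t)^2 + (6)*ζ^2*(conj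 ζ)*c*t*(conj t)^2*(s:ℂ) + (-6)*ζ^2*(conj ζ)*c*t*(conj t)^2*(s:ℂ)^2 + (2)*ζ^2*(conj ζ)*c*t*(conj t)^2*(s:ℂ)^3 + (3)*ζ^2*(conj ζ)*c^2*(conj c)*(conj t) + (-2)*ζ^2*(conj ζ)*c^2*(conj c)*(conj t)*(s:ℂ) + (4)*ζ^2*(conj ζ)^2*c*(conj c)*t*(conj t) + (-8)*ζ^2*(conj ζ)^2*c*(conj c)*t*(conj t)*(s:ℂ) + (4)*ζ^2*(conj ζ)^2*c*(conj c)*t*(conj t)*(s:ℂ)^2 + (-2)*ζ^2*(conj ζ)^2*c^2*(conj c)^2 + (-2)*ζ^2*(conj ζ)^3*c*(conj c)^2*t + (2)*ζ^2*(conj ζ)^3*c*(conj c)^2*t*(s:ℂ) + (1)*ζ^3*(conj ζ)*c^2*(conj t)^2 + (-2)*ζ^3*(conj ζ)*c^2*(conj t)^2*(s:ℂ) + (1)*ζ^3*(conj ζ)*c^2*(conj t)^2*(s:ℂ)^2 + (-2)*ζ^3*(conj ζ)^2*c^2*(conj c)*(conj t) + (2)*ζ^3*(conj ζ)^2*c^2*(conj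 c)*(conj t)*(s:ℂ) + (1)*ζ^3*(conj ζ)^3*c^2*(conj c)^2) * hw
  have hzz : Complex.normSq z < 1 := by
    rw [← Complex.sq_norm]
    nlinarith [hz, norm_nonneg z]
  have h6 : (G * z + D) * conj (G * z + D) -
      (conj D * z + conj G) * conj (conj D * z + conj G) =
      (D * conj D - G * conj G) * (1 - z * conj z) := by
    simp only [map_add, map_mul, Complex.conj_conj]
    ring
  have h6' : ((Complex.normSq (G * z + D) : ℝ) : ℂ) -
      ((Complex.normSq (conj D * z + conj G) : ℝ) : ℂ) =
      ((s ^ 2 * (1 - s) * T2 * Er + s ^ 2 * T2 ^ 2 : ℝ) : ℂ) *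
        ((1 : ℂ) - ((Complex.normSq z : ℝ) : ℂ)) := by
    rw [← Complex.mul_conj, ← Complex.mul_conj, ← Complex.mul_conj, h6, I3]
  have h6r : Complex.normSq (G * z + D) - Complex.normSq (conj D * z + conj G) =
      (s ^ 2 * (1 - s) * T2 * Er + s ^ 2 * T2 ^ 2) * (1 - Complex.normSq z) := by
    exact_mod_cast h6'
  have hFlt : Complex.normSq (conj D * z + conj G) < Complex.normSq (G * z + D) := by
    nlinarith [h6r, hΔpos, hzz]
  have hFabs : ‖conj D * z + conj G‖ < ‖G * z + D‖ := by
    rw [Complex.norm_def, Complex.norm_def]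
    exact Real.sqrt_lt_sqrt (Complex.normSq_nonneg _) hFlt
  have hGD0 : G * z + D ≠ 0 := by
    intro h0
    rw [h0] at hFabs
    simp only [norm_zero] at hFabs
    exact absurd hFabs (not_lt.2 (norm_nonneg _))
  refine ⟨hGD0, ?_⟩
  have huniv : ((s ^ 2 * (1 - s) * T2 * Er + s ^ 2 * T2 ^ 2 : ℝ) : ℂ) * (α * z - B) =
      (((s ^ 2 * (1 - s) * T2 * Er : ℝ) : ℂ) * ζ) * (G * z + D) +
      ((s ^ 2 * T2 ^ 2 : ℝ) : ℂ) * (conj D * z + conj G) := by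
    rw [← I1, ← I2, ← I3]; ring
  have habs1 := congrArg (‖·‖) huniv
  rw [norm_mul, Complex.norm_real, Real.norm_eq_abs, abs_of_pos hΔpos] at habs1
  have e1 : ‖(((s ^ 2 * (1 - s) * T2 * Er : ℝ) : ℂ) * ζ) * (G * z + D)‖ =
      (s ^ 2 * (1 - s) * T2 * Er) * ‖G * z + D‖ := by
    rw [norm_mul, norm_mul, Complex.norm_real, Real.norm_eq_abs, hζ, abs_of_nonneg hμ, mul_one]
  have e2 : ‖((s ^ 2 * T2 ^ 2 : ℝ) : ℂ) * (conj D * z + conj G)‖ =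
      (s ^ 2 * T2 ^ 2) * ‖conj D * z + conj G‖ := by
    rw [norm_mul, Complex.norm_real, Real.norm_eq_abs, abs_of_pos hd2pos]
  have hsum := norm_add_le ((((s ^ 2 * (1 - s) * T2 * Er : ℝ) : ℂ) * ζ) * (G * z + D))
      (((s ^ 2 * T2 ^ 2 : ℝ) : ℂ) * (conj D * z + conj G))
  rw [e1, e2] at hsum
  have hchain : (s ^ 2 * (1 - s) * T2 * Er + s ^ 2 * T2 ^ 2) * ‖α * z - B‖ <
      (s ^ 2 * (1 - s) * T2 * Er + s ^ 2 * T2 ^ 2) * ‖G * z + D‖ := by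
    rw [habs1]
    calc ‖_‖ ≤ _ := hsum
      _ < (s ^ 2 * (1 - s) * T2 * Er) * ‖G * z + D‖ +
          (s ^ 2 * T2 ^ 2) * ‖G * z + D‖ := by
        have h2 : (s ^ 2 * T2 ^ 2) * ‖conj D * z + conj G‖ <
            (s ^ 2 * T2 ^ 2) * ‖G * z + D‖ :=
          (mul_lt_mul_iff_right₀ hd2pos).2 hFabs
        linarith
      _ = _ := by ring
  have hfin : ‖α * z - B‖ < ‖G * z + D‖ :=
    lt_of_mul_lt_mul_left hchain hΔpos.le
  rw [norm_div, div_lt_one (norm_pos_iff.2 hGD0)]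
  exact hfin
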